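/- arXiv:1807.05023 — 4 statements merged into one kernel-verified Lean document; each statement's English description precedes it below -/
import Mathlib

section
/- A subset A of ℝ^d is contained in some affine hyperplane if and only if the infimum over ε > 0 such that A is contained in the open ε-neighborhood of some affine hyperplane is 0. -/
open Metric

/-- A subset `A ⊆ ℝᵈ` is contained in some affine hyperplane iff the infimum of the `ε > 0`
such that `A` is contained in the open `ε`-neighborhood of some affine hyperplane is `0`,
i.e. iff for every `ε > 0` there is an affine hyperplane whose `ε`-neighborhood contains `A`.
Affine hyperplanes are written as level sets `{x | ⟪v, x⟫ = c}` with `v ≠ 0`. -/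
theorem subset_hyperplane_iff_inf_thickening_zero
    (d : ℕ) (A : Set (EuclideanSpace ℝ (Fin d))) :
    (∃ v : EuclideanSpace ℝ (Fin d), v ≠ 0 ∧ ∃ c : ℝ,
        A ⊆ {x | inner ℝ v x = (c : ℝ)}) ↔
      ∀ ε : ℝ, 0 < ε → ∃ v : EuclideanSpace ℝ (Fin d), v ≠ 0 ∧ ∃ c : ℝ,
        A ⊆ Metric.thickening ε {x | inner ℝ v x = (c : ℝ)} := by
  constructor
  · rintro ⟨v, hv, c, hsub⟩ ε hε
    exact ⟨v, hv, c, hsub.trans (self_subset_thickening hε _)⟩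
  · intro h
    rcases A.eq_empty_or_nonempty with rfl | ⟨a0, ha0⟩
    · obtain ⟨v, hv, c, -⟩ := h 1 one_pos
      exact ⟨v, hv, c, Set.empty_subset _⟩
    -- normalized approximating hyperplanes
    have H : ∀ n : ℕ, ∃ u : EuclideanSpace ℝ (Fin d), ‖u‖ = 1 ∧ ∃ k : ℝ,
        ∀ x ∈ A, |inner ℝ u x - k| < 1 / (n + 1 : ℝ) := by
      intro n
      have hpos : (0:ℝ) < 1 / (n + 1 : ℝ) := by positivity
      obtain ⟨v, hv, c, hsub⟩ := h _ hpos
      have hvn : (0:ℝ) < ‖v‖ := norm_pos_iff.mpr hv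
      refine ⟨‖v‖⁻¹ • v, ?_, ‖v‖⁻¹ * c, ?_⟩
      · simp [norm_smul, abs_of_pos (inv_pos.mpr hvn), inv_mul_cancel₀ hvn.ne']
      · intro x hx
        obtain ⟨y, hy, hdy⟩ := mem_thickening_iff.mp (hsub hx)
        have hy' : (inner ℝ v y : ℝ) = c := hy
        have : (inner ℝ (‖v‖⁻¹ • v) x : ℝ) - ‖v‖⁻¹ * c
            = inner ℝ (‖v‖⁻¹ • v) (x - y) := by
          rw [inner_sub_right, real_inner_smul_left, real_inner_smul_left, hy']
        rw [this]
        calc |(inner ℝ (‖v‖⁻¹ • v) (x - y) : ℝ)| ≤ ‖‖v‖⁻¹ • v‖ * ‖x - y‖ :=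
              abs_real_inner_le_norm _ _
          _ = ‖x - y‖ := by
              simp [norm_smul, abs_of_pos (inv_pos.mpr hvn), inv_mul_cancel₀ hvn.ne']
          _ < 1 / (n + 1 : ℝ) := by rwa [← dist_eq_norm]
    choose u hu k hk using H
    -- bound on k
    have hkb : ∀ n, k n ∈ Set.Icc (-(‖a0‖ + 1)) (‖a0‖ + 1) := by
      intro n
      have h1 := hk n a0 ha0
      have h2 : |(inner ℝ (u n) a0 : ℝ)| ≤ ‖a0‖ := by
        simpa [hu n] using abs_real_inner_le_norm (u n) a0
      have h3 : (1:ℝ) / (n + 1 : ℝ) ≤ 1 := by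
        rw [div_le_one (by positivity)]; linarith [Nat.cast_nonneg (α := ℝ) n]
      have : |k n| ≤ ‖a0‖ + 1 := by
        calc |k n| ≤ |(inner ℝ (u n) a0 : ℝ)| + |(inner ℝ (u n) a0 : ℝ) - k n| := by
              have := abs_sub_abs_le_abs_sub (k n) (inner ℝ (u n) a0 : ℝ)
              have := abs_sub_comm (k n) (inner ℝ (u n) a0 : ℝ)
              calc |k n| = |inner ℝ (u n) a0 - (inner ℝ (u n) a0 - k n)| := by ring_nf
                _ ≤ |(inner ℝ (u n) a0 : ℝ)| + |(inner ℝ (u n) a0 : ℝ) - k n| := abs_sub _ _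
          _ ≤ ‖a0‖ + 1 := by linarith
      exact abs_le.mp this
    -- compactness
    have hK : IsCompact ((sphere (0 : EuclideanSpace ℝ (Fin d)) 1) ×ˢ
        Set.Icc (-(‖a0‖ + 1)) (‖a0‖ + 1)) :=
      (isCompact_sphere 0 1).prod isCompact_Icc
    have hmem : ∀ n, (u n, k n) ∈ (sphere (0 : EuclideanSpace ℝ (Fin d)) 1) ×ˢ
        Set.Icc (-(‖a0‖ + 1)) (‖a0‖ + 1) := by
      intro n; exact ⟨by simpa [mem_sphere_iff_norm] using hu n, hkb n⟩
    obtain ⟨⟨w, c⟩, hwc, φ, hφ, hlim⟩ := hK.tendsto_subseq hmem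
    have hw1 : ‖w‖ = 1 := by simpa [mem_sphere_iff_norm] using hwc.1
    refine ⟨w, fun h0 => by simp [h0] at hw1, c, ?_⟩
    intro x hx
    show (inner ℝ w x : ℝ) = c
    have hlimu : Filter.Tendsto (fun n => u (φ n)) Filter.atTop (nhds w) :=
      (continuous_fst.tendsto _).comp hlim
    have hlimk : Filter.Tendsto (fun n => k (φ n)) Filter.atTop (nhds c) :=
      (continuous_snd.tendsto _).comp hlim
    have hlim2 : Filter.Tendsto (fun n => (inner ℝ (u (φ n)) x : ℝ) - k (φ n))
        Filter.atTop (nhds ((inner ℝ w x : ℝ) - c)) :=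
      (hlimu.inner tendsto_const_nhds).sub hlimk
    have hlim0 : Filter.Tendsto (fun n => (inner ℝ (u (φ n)) x : ℝ) - k (φ n))
        Filter.atTop (nhds 0) := by
      refine squeeze_zero_norm (a := fun n : ℕ => 1 / (n + 1 : ℝ)) ?_ ?_
      · intro n
        have := (hk (φ n) x hx).le
        have hle : (1:ℝ) / (φ n + 1 : ℝ) ≤ 1 / (n + 1 : ℝ) := by
          apply one_div_le_one_div_of_le (by positivity)
          have := hφ.le_apply (x := n)
          linarith [(Nat.cast_le (α := ℝ)).mpr this]
        simpa [Real.norm_eq_abs] using this.trans hle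
      · exact tendsto_one_div_add_atTop_nhds_zero_nat
    have := tendsto_nhds_unique hlim2 hlim0
    linarith
end

section
/- Let A be a finite alphabet, T ⊆ A* a tree, and 𝒜 a nonempty collection of nonempty subsets of A. Then T has an infinite 𝒜-subtree if and only if for every n ∈ ℕ, T has an 𝒜-subtree of length n. -/
variable {A : Type*}

/-- A tree over the alphabet `A`: a set of finite words containing the empty word and
closed under taking prefixes. -/
def IsTree (T : Set (List A)) : Prop :=
  [] ∈ T ∧ ∀ v w : List A, v <+: w → w ∈ T → v ∈ T

/-- The set of children of the vertex `a` in the tree `S`. -/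
def childrenSet (S : Set (List A)) (a : List A) : Set A := {i | a ++ [i] ∈ S}

/-- `T` has an (infinite) `𝒜`-subtree: a subtree all of whose vertices have children set
belonging to `𝒜`. -/
def HasSubtree (T : Set (List A)) (𝒜 : Set (Set A)) : Prop :=
  ∃ S : Set (List A), S ⊆ T ∧ IsTree S ∧ ∀ a ∈ S, childrenSet S a ∈ 𝒜

/-- `T` has an `𝒜`-subtree of length `n`: a finite subtree whose maximal vertices have
length `n - 1`, all of whose non-maximal vertices have children set belonging to `𝒜`. -/
def HasSubtreeOfLength (T : Set (List A)) (𝒜 : Set (Set A)) (n : ℕ) : Prop :=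
  ∃ S : Set (List A), S ⊆ T ∧ IsTree S ∧ (∀ w ∈ S, w.length < n) ∧
    (∃ w ∈ S, w.length = n - 1) ∧ ∀ a ∈ S, a.length < n - 1 → childrenSet S a ∈ 𝒜

lemma exists_length_eq {S : Set (List A)} {𝒜 : Set (Set A)} (h𝒜 : ∀ s ∈ 𝒜, s.Nonempty)
    (hS : IsTree S) (hch : ∀ a ∈ S, childrenSet S a ∈ 𝒜) (n : ℕ) :
    ∃ w ∈ S, w.length = n := by
  induction n with
  | zero => exact ⟨[], hS.1, rfl⟩
  | succ k ih =>
    obtain ⟨w, hw, hwl⟩ := ih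
    obtain ⟨i, hi⟩ := h𝒜 _ (hch w hw)
    exact ⟨w ++ [i], hi, by simp [hwl]⟩

/-- A tree over a finite alphabet has an infinite `𝒜`-subtree iff it has `𝒜`-subtrees of
every finite length. -/
theorem hasSubtree_iff_hasSubtreeOfLength [Finite A]
    (T : Set (List A)) (hT : IsTree T) (𝒜 : Set (Set A))
    (h𝒜ne : 𝒜.Nonempty) (h𝒜 : ∀ s ∈ 𝒜, s.Nonempty) :
    HasSubtree T 𝒜 ↔ ∀ n : ℕ, HasSubtreeOfLength T 𝒜 (n + 1) := by
  constructor
  · rintro ⟨S, hST, hS, hch⟩ n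
    refine ⟨{w ∈ S | w.length ≤ n}, fun w hw => hST hw.1,
      ⟨⟨hS.1, by simp⟩, fun v w hvw hw => ⟨hS.2 v w hvw hw.1,
        le_trans hvw.length_le hw.2⟩⟩, fun w hw => Nat.lt_succ_of_le hw.2, ?_, ?_⟩
    · obtain ⟨w, hw, hwl⟩ := exists_length_eq h𝒜 hS hch n
      exact ⟨w, ⟨hw, hwl.le⟩, by simp [hwl]⟩
    · rintro a ⟨ha, -⟩ hal
      have : childrenSet {w ∈ S | w.length ≤ n} a = childrenSet S a := by
        ext i
        simp only [childrenSet, Set.mem_setOf_eq, Set.mem_sep_iff, List.length_append,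
          List.length_singleton]
        exact ⟨fun h => h.1, fun h => ⟨h, by omega⟩⟩
      rw [this]; exact hch a ha
  · intro h
    choose S hST hS hlt hmax hch using h
    let U : Ultrafilter ℕ := Ultrafilter.of Filter.atTop
    have hUat : (U : Filter ℕ) ≤ Filter.atTop := Ultrafilter.of_le _
    set S' : Set (List A) := {w | {n | w ∈ S n} ∈ U} with hS'def
    have hmemS' : ∀ w, w ∈ S' ↔ {n | w ∈ S n} ∈ U := fun w => Iff.rfl
    refine ⟨S', ?_, ⟨?_, ?_⟩, ?_⟩
    · intro w hw
      obtain ⟨n, hn⟩ := (Ultrafilter.nonempty_of_mem hw)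
      exact hST n hn
    · exact Filter.univ_mem' (fun n => (hS n).1)
    · intro v w hvw hw
      exact Filter.mem_of_superset hw (fun n hn => (hS n).2 v w hvw hn)
    · intro a ha
      -- find a set s such that childrenSet (S n) a = s for U-many n
      have hfin : (Set.univ : Set (Set A)).Finite := Set.finite_univ
      have hcover : (Set.univ : Set ℕ) ⊆ ⋃ s ∈ (Set.univ : Set (Set A)),
          {n | childrenSet (S n) a = s} := by
        intro n _
        simp only [Set.mem_iUnion]
        exact ⟨childrenSet (S n) a, Set.mem_univ _, rfl⟩
      have hU : (⋃ s ∈ (Set.univ : Set (Set A)), {n | childrenSet (S n) a = s}) ∈ U :=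
        Filter.mem_of_superset Filter.univ_mem hcover
      obtain ⟨s, -, hs⟩ := (Ultrafilter.finite_biUnion_mem_iff hfin).1 hU
      have hbig : {n | a.length < n} ∈ U := hUat (Filter.eventually_gt_atTop a.length)
      have hE : ({n | a ∈ S n} ∩ {n | childrenSet (S n) a = s} ∩ {n | a.length < n}) ∈ U :=
        Filter.inter_mem (Filter.inter_mem ha hs) hbig
      have hsA : s ∈ 𝒜 := by
        obtain ⟨n, ⟨⟨hn1, hn2⟩, hn3⟩⟩ := Ultrafilter.nonempty_of_mem hE
        rw [← hn2]
        exact hch n a hn1 (by simpa using hn3)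
      have : childrenSet S' a = s := by
        ext i
        simp only [childrenSet, Set.mem_setOf_eq, hmemS']
        constructor
        · intro hi
          obtain ⟨n, hn1, ⟨⟨-, hn2⟩, -⟩⟩ := Ultrafilter.nonempty_of_mem (Filter.inter_mem hi hE)
          rw [← hn2]; exact hn1
        · intro hi
          refine Filter.mem_of_superset hE ?_
          rintro n ⟨⟨-, hn2⟩, -⟩
          show a ++ [i] ∈ S n
          have : i ∈ childrenSet (S n) a := by rw [hn2]; exact hi
          exact this
      rw [this]; exact hsA
end

section
/- Let Φ = {φ_i}_{i∈Λ} be a finite similarity IFS on ℝ^d with contraction ratios {r_i}, attractor K, and coding map γ. Let T ⊆ Λ* be a tree such that for every i ∈ T and every affine hyperplane ℒ ⊂ ℝ^d there exists j ∈ W_T(i) with φ_j(K) ∩ ℒ^(c) = ∅, for a fixed c > 0 (T is (K,c)-diffuse). Then γ(∂T) is hyperplane β-diffuse with β = c·r_min / diam(K), where r_min = min_i r_i. -/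
open Metric

noncomputable section

/-- Composition `φ_{w₁} ∘ … ∘ φ_{w_n}` of the maps of an IFS along a finite word `w`. -/
def compWord {Λ E : Type*} (φ : Λ → E → E) (w : List Λ) : E → E :=
  w.foldr (fun i g => φ i ∘ g) id

/-- A closed set is hyperplane `β`-diffuse. -/
def HyperplaneDiffuseWith {d : ℕ} (F : Set (EuclideanSpace ℝ (Fin d))) (β : ℝ) : Prop :=
  ∃ ξ₀ : ℝ, 0 < ξ₀ ∧ ∀ ξ : ℝ, 0 < ξ → ξ < ξ₀ → ∀ x ∈ F,
    ∀ v : EuclideanSpace ℝ (Fin d), v ≠ 0 → ∀ c' : ℝ,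
      ((F ∩ ball x ξ) \ thickening (β * ξ) {y | inner ℝ v y = (c' : ℝ)}).Nonempty

section Aux

variable {d : ℕ} {Λ : Type*}

local notation "E" => EuclideanSpace ℝ (Fin d)

/-- A similarity of Euclidean space is continuous. -/
lemma similar_continuous {f : E → E} {ρ : ℝ} (hρ : 0 < ρ)
    (h : ∀ x y, dist (f x) (f y) = ρ * dist x y) : Continuous f := by
  have : LipschitzWith ρ.toNNReal f := by
    intro x y
    rw [edist_dist, edist_dist, h, ENNReal.ofReal_mul hρ.le]
    exact le_of_eq rfl
  exact this.continuous

/-- A similarity of Euclidean space is affine. -/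
lemma exists_affine_of_similar {f : E → E} {ρ : ℝ} (hρ : 0 < ρ)
    (h : ∀ x y, dist (f x) (f y) = ρ * dist x y) :
    ∃ g : E →ᵃ[ℝ] E, ⇑g = f := by
  have hmid : ∀ x y, f (midpoint ℝ x y) = midpoint ℝ (f x) (f y) := by
    intro x y
    apply eq_midpoint_of_dist_eq_half
    · rw [h, h, dist_left_midpoint]
      simp only [Real.norm_ofNat]
      ring
    · rw [h, h, dist_midpoint_right]
      simp only [Real.norm_ofNat]
      ring
  exact ⟨AffineMap.ofMapMidpoint f hmid (similar_continuous hρ h), rfl⟩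

lemma compWord_nil (φ : Λ → E → E) : compWord φ ([] : List Λ) = id := rfl

lemma compWord_cons (φ : Λ → E → E) (i : Λ) (w : List Λ) :
    compWord φ (i :: w) = φ i ∘ compWord φ w := rfl

lemma compWord_append (φ : Λ → E → E) (a b : List Λ) :
    compWord φ (a ++ b) = compWord φ a ∘ compWord φ b := by
  induction a with
  | nil => rfl
  | cons i a ih => simp [compWord_cons, List.cons_append, ih, Function.comp_assoc]

lemma compWord_dist (φ : Λ → E → E) (r : Λ → ℝ)
    (hsim : ∀ i x y, dist (φ i x) (φ i y) = r i * dist x y) (w : List Λ) (x y : E) :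
    dist (compWord φ w x) (compWord φ w y) = (w.map r).prod * dist x y := by
  induction w with
  | nil => simp [compWord_nil]
  | cons i w ih =>
      simp only [compWord_cons, Function.comp_apply, List.map_cons, List.prod_cons]
      rw [hsim, ih]; ring

lemma compWord_image_subset (φ : Λ → E → E) {K : Set E}
    (hsub : ∀ i, φ i '' K ⊆ K) (w : List Λ) : compWord φ w '' K ⊆ K := by
  induction w with
  | nil => simp [compWord_nil]
  | cons i w ih =>
      rw [compWord_cons, Set.image_comp]
      exact (Set.image_mono ih).trans (hsub i)

lemma compWord_prod_pos {r : Λ → ℝ} (hr : ∀ i, 0 < r i) (w : List Λ) :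
    0 < (w.map r).prod := by
  induction w with
  | nil => simp
  | cons i w ih => simpa using mul_pos (hr i) ih

end Aux
/-- If `T` is a `(K,c)`-diffuse tree for a similarity IFS `Φ = {φ_i}` with attractor `K`,
then the projection `γ(∂T) = ⋂ₙ ⋃_{w ∈ Tₙ} φ_w(K)` is hyperplane `β`-diffuse with
`β = c · r_min / diam K`. -/
theorem diffuse_tree_implies_hyperplane_diffuse
    {d : ℕ} {Λ : Type*} [Fintype Λ] [Nonempty Λ]
    (φ : Λ → EuclideanSpace ℝ (Fin d) → EuclideanSpace ℝ (Fin d))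
    (r : Λ → ℝ) (hr : ∀ i, r i ∈ Set.Ioo (0:ℝ) 1)
    (hsim : ∀ i x y, dist (φ i x) (φ i y) = r i * dist x y)
    (K : Set (EuclideanSpace ℝ (Fin d))) (hKc : IsCompact K) (hKne : K.Nonempty)
    (hK : K = ⋃ i, φ i '' K)
    (rmin : ℝ) (hrmin : IsLeast (Set.range r) rmin)
    (T : Set (List Λ)) (hroot : [] ∈ T)
    (hprefix : ∀ v w : List Λ, v <+: w → w ∈ T → v ∈ T)
    (c : ℝ) (hc : 0 < c)
    (hdiffuse : ∀ w ∈ T, ∀ v : EuclideanSpace ℝ (Fin d) , v ≠ 0 → ∀ c' : ℝ,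
      ∃ i : Λ, w ++ [i] ∈ T ∧
        (φ i '' K) ∩ thickening c {y | inner ℝ v y = (c' : ℝ)} = ∅) :
    HyperplaneDiffuseWith
      (⋂ n : ℕ, ⋃ w ∈ {w ∈ T | w.length = n}, compWord φ w '' K)
      (c * rmin / Metric.diam K) := by
  classical
  obtain ⟨hrmem, hrlb⟩ := hrmin
  have hrmin_pos : 0 < rmin := by
    obtain ⟨i, hi⟩ := hrmem; rw [← hi]; exact (hr i).1
  have hrpos : ∀ i, 0 < r i := fun i => (hr i).1
  have hsubK : ∀ i, φ i '' K ⊆ K := by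
    intro i
    conv_rhs => rw [hK]
    exact Set.subset_iUnion (fun i => φ i '' K) i
  rcases eq_or_lt_of_le (diam_nonneg (s := K)) with hD | hD
  · -- degenerate case : diam K = 0
    refine ⟨1, one_pos, fun ξ hξ hξ1 x hx v hv c' => ⟨x, ⟨hx, mem_ball_self hξ⟩, ?_⟩⟩
    rw [← hD, div_zero, zero_mul, thickening_of_nonpos le_rfl]
    exact Set.notMem_empty x
  · set D := Metric.diam K with hDdef
    refine ⟨D, hD, fun ξ hξ hξD x hx v hv c' => ?_⟩
    -- unpack membership of x at every level
    have hxF : ∀ n : ℕ, ∃ w, w ∈ T ∧ w.length = n ∧ x ∈ compWord φ w '' K := by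
      intro n
      have hxn := Set.mem_iInter.mp hx n
      simp only [Set.mem_iUnion, Set.mem_setOf_eq, exists_prop] at hxn
      obtain ⟨w, ⟨hwT, hwl⟩, hxw⟩ := hxn
      exact ⟨w, hwT, hwl, hxw⟩
    -- an upper bound for contraction ratios
    have hne : (Finset.univ : Finset Λ).Nonempty := Finset.univ_nonempty
    set rmax := Finset.univ.sup' hne r with hrmax
    have hrmax_lt : rmax < 1 := (Finset.sup'_lt_iff hne).mpr fun i _ => (hr i).2
    have hrmax_nonneg : 0 ≤ rmax :=
      le_trans (hrpos (Classical.arbitrary Λ)).le (Finset.le_sup' r (Finset.mem_univ _))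
    have hprod_le : ∀ w : List Λ, (w.map r).prod ≤ rmax ^ w.length := by
      intro w
      induction w with
      | nil => simp
      | cons i w ih =>
          simp only [List.map_cons, List.prod_cons, List.length_cons, pow_succ']
          exact mul_le_mul (Finset.le_sup' r (Finset.mem_univ i)) ih
            (compWord_prod_pos hrpos w).le hrmax_nonneg
    -- pick a word of minimal length whose cylinder is smaller than ξ
    have hPex : ∃ n : ℕ, ∃ w, w ∈ T ∧ w.length = n ∧ x ∈ compWord φ w '' K ∧
        (w.map r).prod * D < ξ := by
      obtain ⟨n, hn⟩ := exists_pow_lt_of_lt_one (div_pos hξ hD) hrmax_lt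
      obtain ⟨w, hwT, hwl, hxw⟩ := hxF n
      refine ⟨n, w, hwT, hwl, hxw, ?_⟩
      calc (w.map r).prod * D ≤ rmax ^ n * D := by
            exact mul_le_mul_of_nonneg_right (hwl ▸ hprod_le w) (le_of_lt hD)
        _ < ξ := by rwa [← lt_div_iff₀ hD]
    obtain ⟨w, hwT, hwl, hxw, hwsmall⟩ := Nat.find_spec hPex
    -- the word is nonempty
    have hwne : w ≠ [] := by
      rintro rfl
      simp only [List.map_nil, List.prod_nil, one_mul] at hwsmall
      linarith
    -- minimality gives a lower bound on the contraction ratio of w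
    set ρ := (w.map r).prod with hρdef
    have hρpos : 0 < ρ := compWord_prod_pos hrpos w
    have hρlb : rmin * ξ ≤ ρ * D := by
      set w' := w.dropLast with hw'
      set j := w.getLast hwne with hj
      have hsplit : w' ++ [j] = w := List.dropLast_append_getLast hwne
      have hw'T : w' ∈ T := hprefix w' w ⟨[j], hsplit⟩ hwT
      have hw'len : w'.length < Nat.find hPex := by
        have h1 : 0 < w.length := List.length_pos_iff.mpr hwne
        have h2 : w'.length = w.length - 1 := List.length_dropLast
        omega
      have hxw' : x ∈ compWord φ w' '' K := by
        have : compWord φ w '' K ⊆ compWord φ w' '' K := by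
          conv_lhs => rw [← hsplit]
          rw [compWord_append, Set.image_comp]
          exact Set.image_mono (compWord_image_subset φ hsubK [j])
        exact this hxw
      have hnP := Nat.find_min hPex hw'len
      push_neg at hnP
      have hlarge : ξ ≤ (w'.map r).prod * D := hnP w' hw'T rfl hxw'
      have hρ : ρ = (w'.map r).prod * r j := by
        conv_lhs => rw [hρdef, ← hsplit]
        simp
      have hrj : rmin ≤ r j := hrlb ⟨j, rfl⟩
      have hw'pos : 0 < (w'.map r).prod := compWord_prod_pos hrpos w'
      calc rmin * ξ ≤ rmin * ((w'.map r).prod * D) := by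
            exact mul_le_mul_of_nonneg_left hlarge hrmin_pos.le
        _ ≤ (w'.map r).prod * r j * D := by nlinarith
        _ = ρ * D := by rw [hρ]
    -- the map along w is an affine similarity
    set f := compWord φ w with hfdef
    have hfdist : ∀ a b, dist (f a) (f b) = ρ * dist a b := fun a b =>
      compWord_dist φ r hsim w a b
    obtain ⟨g, hg⟩ := exists_affine_of_similar hρpos hfdist
    set A := g.linear with hA
    have hgA : ∀ u, g u = A u + g 0 := by
      intro u
      have := g.linearMap_vsub u 0
      simp only [vsub_eq_sub, sub_zero] at this
      rw [← hA] at this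
      rw [this]
      abel
    have hAnorm : ∀ u, ‖A u‖ = ρ * ‖u‖ := by
      intro u
      have h1 : dist (g u) (g 0) = ρ * dist u 0 := by rw [hg]; exact hfdist u 0
      rw [dist_eq_norm, dist_eq_norm, sub_zero, hgA u] at h1
      simpa using h1
    have hAinj : Function.Injective A := by
      intro a b hab
      have : ‖A (a - b)‖ = 0 := by rw [map_sub, hab, sub_self, norm_zero]
      rw [hAnorm] at this
      have : ‖a - b‖ = 0 := by
        rcases mul_eq_zero.mp this with h | h
        · exact absurd h hρpos.ne'
        · exact h
      rwa [norm_eq_zero, sub_eq_zero] at this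
    have hAsurj : Function.Surjective A := LinearMap.injective_iff_surjective.mp hAinj
    have hfsurj : Function.Surjective f := by
      intro q
      obtain ⟨p, hp⟩ := hAsurj (q - g 0)
      exact ⟨p, by rw [← hg, hgA p, hp]; abel⟩
    -- the pulled-back hyperplane
    set v' := LinearMap.adjoint A v with hv'def
    have hinner : ∀ u : EuclideanSpace ℝ (Fin d), (inner ℝ v' u : ℝ) = inner ℝ v (A u) :=
      fun u => LinearMap.adjoint_inner_left A u v
    have hv' : v' ≠ 0 := by
      intro h0
      obtain ⟨u, hu⟩ := hAsurj v
      have h1 : (inner ℝ v (A u) : ℝ) = 0 := by rw [← hinner, h0, inner_zero_left]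
      rw [hu] at h1
      exact hv (inner_self_eq_zero.mp h1)
    have hmemiff : ∀ y : EuclideanSpace ℝ (Fin d),
        (inner ℝ v' y : ℝ) = c' - inner ℝ v (g 0) ↔ (inner ℝ v (f y) : ℝ) = c' := by
      intro y
      rw [hinner, ← hg, hgA y, inner_add_right]
      constructor <;> intro h <;> linarith
    obtain ⟨i, hiT, hidisj⟩ := hdiffuse w hwT v' hv' (c' - inner ℝ v (g 0))
    -- build an infinite branch below w ++ [i]
    choose ch hchT _hchd using hdiffuse
    obtain ⟨seq, hseq0, hseqS⟩ : ∃ s : ℕ → {u : List Λ // u ∈ T},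
        (s 0).1 = w ++ [i] ∧ ∀ n, ∃ j : Λ, (s (n + 1)).1 = (s n).1 ++ [j] :=
      ⟨fun n => Nat.rec ⟨w ++ [i], hiT⟩
        (fun _ p => ⟨p.1 ++ [ch p.1 p.2 v hv 0], hchT p.1 p.2 v hv 0⟩) n,
        rfl, fun n => ⟨_, rfl⟩⟩
    have hseqlen : ∀ n, (seq n).1.length = w.length + 1 + n := by
      intro n
      induction n with
      | zero => simp [hseq0]
      | succ n ih =>
          obtain ⟨j, hj⟩ := hseqS n
          rw [hj]
          simp [ih]
          omega
    have hφcont : ∀ u : List Λ, Continuous (compWord φ u) := by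
      intro u
      exact similar_continuous (compWord_prod_pos hrpos u) (compWord_dist φ r hsim u)
    have hCsub : ∀ n, compWord φ (seq (n + 1)).1 '' K ⊆ compWord φ (seq n).1 '' K := by
      intro n
      obtain ⟨j, hj⟩ := hseqS n
      rw [hj, compWord_append, Set.image_comp]
      exact Set.image_mono (compWord_image_subset φ hsubK _)
    obtain ⟨z, hz⟩ := IsCompact.nonempty_iInter_of_sequence_nonempty_isCompact_isClosed
      (fun n => compWord φ (seq n).1 '' K) hCsub
      (fun n => hKne.image _) (hKc.image (hφcont _))
      (fun n => ((hKc.image (hφcont _)).isClosed))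
    have hzC : ∀ n, z ∈ compWord φ (seq n).1 '' K := fun n => Set.mem_iInter.mp hz n
    -- z decomposes through f
    have hz0 : z ∈ f '' (φ i '' K) := by
      have h0 := hzC 0
      rw [hseq0, compWord_append, Set.image_comp] at h0
      rw [hfdef]
      convert h0 using 2
      rfl
    obtain ⟨y, hyK, hyz⟩ := hz0
    have hyK' : y ∈ K := hsubK i hyK
    -- z is in the ball
    have hzball : z ∈ ball x ξ := by
      obtain ⟨kx, hkx, hkxx⟩ := hxw
      rw [mem_ball, ← hkxx, ← hyz]
      calc dist (f y) (f kx) = ρ * dist y kx := hfdist y kx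
        _ ≤ ρ * D := by
            exact mul_le_mul_of_nonneg_left (dist_le_diam_of_mem hKc.isBounded hyK' hkx) hρpos.le
        _ < ξ := hwsmall
    -- z is in the limit set
    have hzF : z ∈ ⋂ n : ℕ, ⋃ u ∈ {u ∈ T | u.length = n}, compWord φ u '' K := by
      rw [Set.mem_iInter]
      intro m
      simp only [Set.mem_iUnion, Set.mem_setOf_eq, exists_prop]
      rcases le_or_gt m (w.length + 1) with hm | hm
      · refine ⟨(w ++ [i]).take m, ⟨hprefix _ _ (List.take_prefix m _) hiT, ?_⟩, ?_⟩
        · rw [List.length_take]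
          simp
          omega
        · have hzz := hzC 0
          rw [hseq0] at hzz
          have hsub2 : compWord φ (w ++ [i]) '' K ⊆ compWord φ ((w ++ [i]).take m) '' K := by
            conv_lhs => rw [← List.take_append_drop m (w ++ [i])]
            rw [compWord_append, Set.image_comp]
            exact Set.image_mono (compWord_image_subset φ hsubK _)
          exact hsub2 hzz
      · refine ⟨(seq (m - (w.length + 1))).1, ⟨(seq _).2, ?_⟩, hzC _⟩
        rw [hseqlen]
        omega
    -- z avoids the thickened hyperplane
    refine ⟨z, ⟨hzF, hzball⟩, ?_⟩
    intro hmem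
    rw [mem_thickening_iff] at hmem
    obtain ⟨q, hqL, hdq⟩ := hmem
    obtain ⟨p, hp⟩ := hfsurj q
    have hpL : (inner ℝ v' p : ℝ) = c' - inner ℝ v (g 0) := by
      apply (hmemiff p).mpr
      rw [hp]
      exact hqL
    have hyp : dist y p < c := by
      have h1 : ρ * dist y p < c * rmin / D * ξ := by
        rw [← hfdist y p, hyz, hp]
        exact hdq
      have h2 : c * rmin / D * ξ ≤ c * ρ := by
        rw [div_mul_eq_mul_div, div_le_iff₀ hD]
        calc c * rmin * ξ = c * (rmin * ξ) := by ring
          _ ≤ c * (ρ * D) := mul_le_mul_of_nonneg_left hρlb hc.le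
          _ = c * ρ * D := by ring
      have h3 : ρ * dist y p < ρ * c := by
        calc ρ * dist y p < c * ρ := lt_of_lt_of_le h1 h2
          _ = ρ * c := by ring
      exact lt_of_mul_lt_mul_left h3 hρpos.le
    have hfin : y ∈ φ i '' K ∩ thickening c {u | inner ℝ v' u = (c' - inner ℝ v (g 0) : ℝ)} :=
      ⟨hyK, mem_thickening_iff.mpr ⟨p, hpL, hyp⟩⟩
    rw [hidisj] at hfin
    exact hfin
end
end

section
/- Let Φ = {φ_i}_{i∈Λ} be a finite similarity IFS on ℝ^d and F ⊂ ℝ^d a nonempty compact set with φ_i(F) ⊆ F for all i ∈ Λ. Then there exists c > 0 such that for every affine hyperplane ℒ ⊆ ℝ^d some i ∈ Λ satisfies φ_i(F) ∩ ℒ^(c) = ∅, if and only if for every affine hyperplane ℒ there exists i ∈ Λ with φ_i(F) ∩ ℒ = ∅. -/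
open Metric

/-- Let `Φ = {φ_i}` be a finite similarity IFS on `ℝᵈ` and `F` a nonempty compact set with
`φ_i(F) ⊆ F` for all `i`. Then `Φ` is `(F,c)`-diffuse for some `c > 0` iff for every affine
hyperplane `ℒ` there is some `i` with `φ_i(F) ∩ ℒ = ∅`. -/
theorem diffuse_iff_misses_hyperplanes
    {d : ℕ} {Λ : Type*} [Fintype Λ] [Nonempty Λ]
    (φ : Λ → EuclideanSpace ℝ (Fin d) → EuclideanSpace ℝ (Fin d))
    (r : Λ → ℝ) (hr : ∀ i, r i ∈ Set.Ioo (0:ℝ) 1)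
    (hsim : ∀ i x y, dist (φ i x) (φ i y) = r i * dist x y)
    (F : Set (EuclideanSpace ℝ (Fin d))) (hFc : IsCompact F) (hFne : F.Nonempty)
    (hF : ∀ i, φ i '' F ⊆ F) :
    (∃ c : ℝ, 0 < c ∧ ∀ v : EuclideanSpace ℝ (Fin d), v ≠ 0 → ∀ a : ℝ,
        ∃ i : Λ, (φ i '' F) ∩ thickening c {y | inner ℝ v y = (a : ℝ)} = ∅) ↔
      (∀ v : EuclideanSpace ℝ (Fin d), v ≠ 0 → ∀ a : ℝ,
        ∃ i : Λ, (φ i '' F) ∩ {y | inner ℝ v y = (a : ℝ)} = ∅) := by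
  constructor
  · rintro ⟨c, hc, h⟩ v hv a
    obtain ⟨i, hi⟩ := h v hv a
    refine ⟨i, ?_⟩
    have hsub : ({y : EuclideanSpace ℝ (Fin d) | inner ℝ v y = (a:ℝ)}) ⊆ thickening c {y : EuclideanSpace ℝ (Fin d) | inner ℝ v y = (a:ℝ)} :=
      self_subset_thickening hc _
    exact Set.eq_empty_of_subset_empty (hi ▸ Set.inter_subset_inter_right _ hsub)
  · intro hL
    by_contra hcon
    push_neg at hcon
    -- bound for F
    obtain ⟨R, hR⟩ := hFc.isBounded.subset_closedBall 0
    have hRnorm : ∀ x ∈ F, ‖x‖ ≤ R := by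
      intro x hx
      simpa [mem_closedBall, dist_zero_right] using hR hx
    -- choose bad hyperplanes for c = 1/(n+1)
    have hpos : ∀ n : ℕ, (0:ℝ) < 1 / (n + 1) := fun n => by positivity
    choose v hv a hall using fun n : ℕ => hcon (1/(n+1)) (hpos n)
    -- normalize
    set u : ℕ → EuclideanSpace ℝ (Fin d) := fun n => ‖v n‖⁻¹ • v n with hu_def
    set b : ℕ → ℝ := fun n => a n / ‖v n‖ with hb_def
    have hvnorm : ∀ n, ‖v n‖ ≠ 0 := fun n => norm_ne_zero_iff.2 (hv n)
    have hunorm : ∀ n, ‖u n‖ = 1 := fun n => norm_smul_inv_norm (hv n)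
    have hplane : ∀ n, ({y : EuclideanSpace ℝ (Fin d) | inner ℝ (v n) y = (a n : ℝ)})
        = {y : EuclideanSpace ℝ (Fin d) | inner ℝ (u n) y = (b n : ℝ)} := by
      intro n
      ext y
      simp only [Set.mem_setOf_eq, hu_def, hb_def, real_inner_smul_left]
      rw [div_eq_inv_mul]
      constructor
      · intro h; rw [h]
      · intro h
        exact mul_left_cancel₀ (inv_ne_zero (hvnorm n)) h
    -- each hyperplane meets every φ i '' F within 1/(n+1) : extract points
    have hall' : ∀ (n : ℕ) (i : Λ), ((φ i '' F) ∩
        thickening (1/(n+1)) {y : EuclideanSpace ℝ (Fin d) | inner ℝ (u n) y = (b n : ℝ)}).Nonempty := by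
      intro n i
      rw [← hplane]
      exact hall n i
    -- bound on b n
    have hbbd : ∀ n, |b n| ≤ R + 1 := by
      intro n
      obtain ⟨y, hyF, hyth⟩ := hall' n (Classical.arbitrary Λ)
      obtain ⟨z, hz, hdz⟩ := mem_thickening_iff.1 hyth
      have hyR : ‖y‖ ≤ R := hRnorm y (hF _ hyF)
      have hzn : ‖z‖ ≤ R + 1 := by
        have h1 : (1:ℝ)/(n+1) ≤ 1 := by
          rw [div_le_one (by positivity)]; linarith [Nat.cast_nonneg (α := ℝ) n]
        calc ‖z‖ ≤ ‖y‖ + dist y z := by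
              rw [dist_eq_norm]
              calc ‖z‖ = ‖y - (y - z)‖ := by rw [sub_sub_cancel]
                _ ≤ ‖y‖ + ‖y - z‖ := norm_sub_le _ _
          _ ≤ R + 1 := add_le_add hyR (le_of_lt (lt_of_lt_of_le hdz h1))
      have hz' : inner ℝ (u n) z = (b n : ℝ) := hz
      calc |b n| = |inner ℝ (u n) z| := by rw [hz']
        _ ≤ ‖u n‖ * ‖z‖ := abs_real_inner_le_norm _ _
        _ = ‖z‖ := by rw [hunorm n, one_mul]
        _ ≤ R + 1 := hzn
    -- compactness: subsequence of (u n, b n)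
    have hK : IsCompact ((Metric.sphere (0:EuclideanSpace ℝ (Fin d)) 1) ×ˢ Set.Icc (-(R+1)) (R+1)) :=
      (isCompact_sphere 0 1).prod isCompact_Icc
    have hmem : ∀ n, (u n, b n) ∈ (Metric.sphere (0:EuclideanSpace ℝ (Fin d)) 1) ×ˢ Set.Icc (-(R+1)) (R+1) := by
      intro n
      constructor
      · simpa [mem_sphere_iff_norm] using hunorm n
      · exact abs_le.1 (hbbd n)
    obtain ⟨⟨w, t⟩, hwt, g, hg, htend⟩ := hK.tendsto_subseq hmem
    have hw1 : ‖w‖ = 1 := by simpa [mem_sphere_iff_norm] using hwt.1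
    have hwne : w ≠ 0 := by
      intro h; rw [h, norm_zero] at hw1; exact one_ne_zero hw1.symm
    -- apply hypothesis to limit hyperplane
    obtain ⟨i, hi⟩ := hL w hwne t
    -- φ i '' F is compact and nonempty
    have hlip : LipschitzWith (Real.toNNReal (r i)) (φ i) := by
      apply LipschitzWith.of_dist_le_mul
      intro x y
      rw [hsim i x y, Real.coe_toNNReal _ (le_of_lt (hr i).1)]
    have hC : IsCompact (φ i '' F) := hFc.image hlip.continuous
    have hCne : (φ i '' F).Nonempty := hFne.image _
    -- min of |⟪w,y⟫ - t| on φ i '' F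
    have hcont : Continuous fun y : EuclideanSpace ℝ (Fin d) => |inner ℝ w y - t| := by
      apply Continuous.abs
      exact (continuous_const.inner continuous_id).sub continuous_const
    obtain ⟨y₀, hy₀, hmin⟩ := hC.exists_isMinOn hCne hcont.continuousOn
    set ε := |inner ℝ w y₀ - (t:ℝ)| with hε_def
    have hεpos : 0 < ε := by
      rw [hε_def, abs_pos, sub_ne_zero]
      intro h
      exact Set.notMem_empty y₀ (hi ▸ Set.mem_inter hy₀ h)
    -- convergence of the pieces
    have htu : Filter.Tendsto (fun n => u (g n)) Filter.atTop (nhds w) :=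
      ((continuous_fst.tendsto _).comp htend)
    have htb : Filter.Tendsto (fun n => b (g n)) Filter.atTop (nhds t) :=
      ((continuous_snd.tendsto _).comp htend)
    have htun : Filter.Tendsto (fun n => ‖u (g n) - w‖ * (R+1)) Filter.atTop (nhds 0) := by
      have := (htu.sub_const w).norm
      simpa using this.mul_const (R+1)
    have htbn : Filter.Tendsto (fun n => |b (g n) - t|) Filter.atTop (nhds 0) := by
      have := (htb.sub_const t).abs
      simpa using this
    have htinv : Filter.Tendsto (fun n => 1 / ((g n : ℝ) + 1)) Filter.atTop (nhds 0) :=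
      tendsto_one_div_add_atTop_nhds_zero_nat.comp (hg.tendsto_atTop)
    have htD : Filter.Tendsto
        (fun n => ‖u (g n) - w‖ * (R+1) + |b (g n) - t| + 1 / ((g n : ℝ) + 1))
        Filter.atTop (nhds 0) := by
      have := (htun.add htbn).add htinv
      simpa using this
    have hev : ∀ᶠ n in Filter.atTop,
        ‖u (g n) - w‖ * (R+1) + |b (g n) - t| + 1 / ((g n : ℝ) + 1) < ε :=
      htD.eventually_lt_const hεpos
    obtain ⟨N, hN⟩ := hev.exists
    set n := g N with hn_def
    -- point in the intersection for index n and map i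
    obtain ⟨y, hyF, hyth⟩ := hall' n i
    obtain ⟨z, hz, hdz⟩ := mem_thickening_iff.1 hyth
    have hz' : inner ℝ (u n) z = (b n : ℝ) := hz
    have hyR : ‖y‖ ≤ R := hRnorm y (hF _ hyF)
    have h1 : ε ≤ |inner ℝ w y - t| := hmin hyF
    have h2 : |inner ℝ w y - (t:ℝ)| ≤
        ‖u n - w‖ * (R+1) + |b n - t| + 1 / ((n:ℝ) + 1) := by
      have e1 : |inner ℝ w y - inner ℝ (u n) y| ≤ ‖u n - w‖ * (R+1) := by
        have : (inner ℝ w y - inner ℝ (u n) y : ℝ) = inner ℝ (w - u n) y := by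
          rw [inner_sub_left]
        rw [this]
        calc |inner ℝ (w - u n) y| ≤ ‖w - u n‖ * ‖y‖ := abs_real_inner_le_norm _ _
          _ ≤ ‖u n - w‖ * (R + 1) := by
              rw [norm_sub_rev]
              apply mul_le_mul_of_nonneg_left _ (norm_nonneg _)
              linarith
      have e2 : |inner ℝ (u n) y - (b n : ℝ)| ≤ 1 / ((n:ℝ) + 1) := by
        have : (inner ℝ (u n) y - b n : ℝ) = inner ℝ (u n) (y - z) := by
          rw [inner_sub_right, hz']
        rw [this]
        calc |inner ℝ (u n) (y - z)| ≤ ‖u n‖ * ‖y - z‖ := abs_real_inner_le_norm _ _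
          _ = dist y z := by rw [hunorm n, one_mul, dist_eq_norm]
          _ ≤ 1 / ((n:ℝ) + 1) := le_of_lt hdz
      calc |inner ℝ w y - (t:ℝ)|
          = |(inner ℝ w y - inner ℝ (u n) y) + (inner ℝ (u n) y - b n) + (b n - t)| := by ring_nf
        _ ≤ |inner ℝ w y - inner ℝ (u n) y| + |inner ℝ (u n) y - (b n:ℝ)| + |b n - t| := by
            calc |(inner ℝ w y - inner ℝ (u n) y) + (inner ℝ (u n) y - b n) + ((b n:ℝ) - t)|
                ≤ |(inner ℝ w y - inner ℝ (u n) y) + (inner ℝ (u n) y - (b n:ℝ))| + |b n - t| :=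
                  abs_add_le _ _
              _ ≤ |inner ℝ w y - inner ℝ (u n) y| + |inner ℝ (u n) y - (b n:ℝ)| + |b n - t| :=
                  add_le_add_left (abs_add_le _ _) _
        _ ≤ ‖u n - w‖ * (R+1) + |b n - t| + 1 / ((n:ℝ) + 1) := by
            linarith [e1, e2]
    linarith [h1, h2, hN]
end
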